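/- arXiv:2108.09201 — 2 statements merged into one kernel-verified Lean document; each statement's English description precedes it below -/
import Mathlib

section
/- The function G defined on (0, ∞) by G(x) = (√π/2) · (e^{x²}/x) · erf(x), where erf(x) = (2/√π) ∫₀ˣ e^{−t²} dt, is strictly increasing on (0, ∞): for all real numbers x, y with 0 < x < y, G(x) < G(y). -/
open Real

/-- The error function `erf x = (2/√π) ∫₀ˣ e^{−t²} dt`. -/
noncomputable def erf (x : ℝ) : ℝ :=
  (2 / Real.sqrt π) * ∫ t in (0:ℝ)..x, Real.exp (-t ^ 2)

/-- `G x = (√π/2) · (e^{x²}/x) · erf x`. -/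
noncomputable def G (x : ℝ) : ℝ :=
  (Real.sqrt π / 2) * (Real.exp (x ^ 2) / x) * erf x

lemma G_eq (x : ℝ) (hx : 0 < x) :
    G x = ∫ s in (0:ℝ)..1, Real.exp (x ^ 2 * (1 - s ^ 2)) := by
  have hπ : Real.sqrt π ≠ 0 := by positivity
  have h1 : (∫ s in (0:ℝ)..1, Real.exp (-(x * s) ^ 2))
      = x⁻¹ • ∫ t in (0:ℝ)..(x:ℝ), Real.exp (-t ^ 2) := by
    simpa using intervalIntegral.integral_comp_mul_left
      (fun t => Real.exp (-t ^ 2)) hx.ne' (a := 0) (b := 1)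
  have h2 : ∀ s : ℝ, Real.exp (x ^ 2 * (1 - s ^ 2))
      = Real.exp (x ^ 2) * Real.exp (-(x * s) ^ 2) := by
    intro s
    rw [← Real.exp_add]
    ring_nf
  calc G x = Real.exp (x ^ 2) * (x⁻¹ * ∫ t in (0:ℝ)..x, Real.exp (-t ^ 2)) := by
        unfold G erf
        field_simp
    _ = Real.exp (x ^ 2) * ∫ s in (0:ℝ)..1, Real.exp (-(x * s) ^ 2) := by
        rw [h1]; simp [smul_eq_mul]
    _ = ∫ s in (0:ℝ)..1, Real.exp (x ^ 2) * Real.exp (-(x * s) ^ 2) := by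
        rw [intervalIntegral.integral_const_mul]
    _ = ∫ s in (0:ℝ)..1, Real.exp (x ^ 2 * (1 - s ^ 2)) := by
        simp_rw [h2]

/-- `G` is strictly increasing on `(0, ∞)`. -/
theorem G_strictMonoOn : ∀ x y : ℝ, 0 < x → x < y → G x < G y := by
  intro x y hx hxy
  rw [G_eq x hx, G_eq y (hx.trans hxy)]
  apply intervalIntegral.integral_lt_integral_of_continuousOn_of_le_of_exists_lt
    zero_lt_one
  · exact (Real.continuous_exp.comp (by continuity)).continuousOn
  · exact (Real.continuous_exp.comp (by continuity)).continuousOn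
  · intro s hs
    apply Real.exp_le_exp.2
    have h1 : (0:ℝ) ≤ 1 - s ^ 2 := by nlinarith [hs.1, hs.2]
    have h2 : x ^ 2 ≤ y ^ 2 := by nlinarith
    exact mul_le_mul_of_nonneg_right h2 h1
  · refine ⟨0, by norm_num, ?_⟩
    apply Real.exp_lt_exp.2
    have h2 : x ^ 2 < y ^ 2 := by nlinarith
    nlinarith
end

section
/- The function G defined by G(x) = (√π/2) · (e^{x²}/x) · erf(x) maps the interval (0, ∞) bijectively onto the interval (1, ∞); in particular its inverse G⁻¹ : (1, ∞) → (0, ∞) is well defined. -/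
open Real

namespace GAux

noncomputable def F (x : ℝ) : ℝ := ∫ t in (0:ℝ)..x, Real.exp (-t ^ 2)

lemma hc : Continuous fun t : ℝ => Real.exp (-t ^ 2) := by continuity

lemma hFderiv (x : ℝ) : HasDerivAt F (Real.exp (-x ^ 2)) x :=
  (hc.integral_hasStrictDerivAt 0 x).hasDerivAt

lemma hFcont : Continuous F :=
  continuous_iff_continuousAt.2 fun x => (hFderiv x).continuousAt

lemma F_le {x : ℝ} (hx : 0 ≤ x) : F x ≤ x := by
  have h := intervalIntegral.integral_mono_on (μ := MeasureTheory.volume) hx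
    (hc.intervalIntegrable 0 x) (intervalIntegrable_const (c := (1:ℝ)))
    (fun t _ => by
      have : -t ^ 2 ≤ 0 := by nlinarith [sq_nonneg t]
      simpa using Real.exp_le_one_iff.mpr this)
  simpa [F] using h

lemma F_pos {x : ℝ} (hx : 0 < x) : 0 < F x :=
  intervalIntegral.intervalIntegral_pos_of_pos (hc.intervalIntegrable 0 x)
    (fun t => Real.exp_pos _) hx

lemma F_lower {x : ℝ} (hx : 0 < x) : x * Real.exp (-x ^ 2) < F x := by
  have hsplit : F (x/2) + ∫ t in (x/2)..x, Real.exp (-t ^ 2) = F x :=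
    intervalIntegral.integral_add_adjacent_intervals
      (hc.intervalIntegrable 0 (x/2)) (hc.intervalIntegrable (x/2) x)
  have h1 : (x/2) * Real.exp (-(x/2) ^ 2) ≤ F (x/2) := by
    have h := intervalIntegral.integral_mono_on (μ := MeasureTheory.volume)
      (by linarith : (0:ℝ) ≤ x/2)
      (intervalIntegrable_const (c := Real.exp (-(x/2) ^ 2)))
      (hc.intervalIntegrable 0 (x/2))
      (fun t ht => by
        apply Real.exp_le_exp.mpr
        have h1 := ht.1; have h2 := ht.2
        nlinarith)
    simpa [F] using h
  have h2 : (x/2) * Real.exp (-x ^ 2) ≤ ∫ t in (x/2)..x, Real.exp (-t ^ 2) := by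
    have h := intervalIntegral.integral_mono_on (μ := MeasureTheory.volume)
      (by linarith : x/2 ≤ x)
      (intervalIntegrable_const (c := Real.exp (-x ^ 2)))
      (hc.intervalIntegrable (x/2) x)
      (fun t ht => by
        apply Real.exp_le_exp.mpr
        have h1 := ht.1; have h2 := ht.2
        nlinarith)
    have : (x - x/2) * Real.exp (-x ^ 2) = (x/2) * Real.exp (-x ^ 2) := by ring
    simpa [this] using h
  have hlt : Real.exp (-x ^ 2) < Real.exp (-(x/2) ^ 2) := by
    apply Real.exp_lt_exp.mpr; nlinarith
  nlinarith

lemma G_eq (x : ℝ) : G x = Real.exp (x ^ 2) * F x / x := by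
  have hs : Real.sqrt π ≠ 0 := ne_of_gt (Real.sqrt_pos.mpr Real.pi_pos)
  unfold G erf
  rcases eq_or_ne x 0 with h | h
  · simp [h, F]
  · show (Real.sqrt π / 2) * (Real.exp (x ^ 2) / x) * ((2 / Real.sqrt π) * F x)
      = Real.exp (x ^ 2) * F x / x
    field_simp

lemma G_cont : ContinuousOn G (Set.Ioi (0:ℝ)) := by
  have : ContinuousOn (fun x => Real.exp (x ^ 2) * F x / x) (Set.Ioi (0:ℝ)) := by
    apply ContinuousOn.div
    · exact (((continuous_pow 2).rexp).mul hFcont).continuousOn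
    · exact continuous_id.continuousOn
    · exact fun x hx => ne_of_gt hx
  exact this.congr fun x _ => G_eq x

lemma G_gt_one {x : ℝ} (hx : 0 < x) : 1 < G x := by
  rw [G_eq, lt_div_iff₀ hx, one_mul]
  have h := F_lower hx
  have hE : 0 < Real.exp (x ^ 2) := Real.exp_pos _
  have key : Real.exp (x ^ 2) * (x * Real.exp (-x ^ 2)) < Real.exp (x ^ 2) * F x :=
    (mul_lt_mul_iff_right₀ hE).mpr h
  have : Real.exp (x ^ 2) * (x * Real.exp (-x ^ 2)) = x := by
    rw [show Real.exp (x ^ 2) * (x * Real.exp (-x ^ 2))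
        = x * (Real.exp (x ^ 2) * Real.exp (-x ^ 2)) by ring, ← Real.exp_add]
    simp
  linarith [this ▸ key]

lemma G_deriv {x : ℝ} (hx : 0 < x) :
    HasDerivAt G ((
      (Real.exp (x ^ 2) * (2 * x) * F x + Real.exp (x ^ 2) * Real.exp (-x ^ 2)) * x
        - Real.exp (x ^ 2) * F x * 1) / x ^ 2) x := by
  have hN : HasDerivAt (fun x => Real.exp (x ^ 2) * F x)
      (Real.exp (x ^ 2) * (2 * x) * F x + Real.exp (x ^ 2) * Real.exp (-x ^ 2)) x := by
    have hpow : HasDerivAt (fun x : ℝ => x ^ 2) (2 * x) x := by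
      simpa using hasDerivAt_pow 2 x
    exact (hpow.exp.mul (hFderiv x))
  have := hN.div (hasDerivAt_id x) (ne_of_gt hx)
  have hfun : G = fun x => Real.exp (x ^ 2) * F x / x := funext G_eq
  rw [hfun]
  exact this

lemma G_strictMono : StrictMonoOn G (Set.Ioi (0:ℝ)) := by
  apply strictMonoOn_of_deriv_pos (convex_Ioi 0) G_cont
  intro x hx
  rw [interior_Ioi] at hx
  have hx' : (0:ℝ) < x := hx
  rw [(G_deriv hx').deriv]
  apply div_pos _ (by positivity)
  have hE : 0 < Real.exp (x ^ 2) := Real.exp_pos _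
  have hEE : Real.exp (x ^ 2) * Real.exp (-x ^ 2) = 1 := by
    rw [← Real.exp_add]; simp
  rw [hEE]
  -- need E*2x*F*x + x - E*F > 0, i.e. E*F*(1-2x²) < x
  have hF0 : 0 < F x := F_pos hx
  rcases le_or_gt (1 - 2 * x ^ 2) 0 with h | h
  · nlinarith [mul_pos hE hF0,
      mul_nonneg (mul_pos hE hF0).le (by linarith : (0:ℝ) ≤ 2 * x ^ 2 - 1)]
  · have hFle : F x ≤ x := F_le hx.le
    have hexp : 1 - 2 * x ^ 2 < Real.exp (-x ^ 2) := by
      have hne : (-x ^ 2 : ℝ) ≠ 0 := ne_of_lt (by nlinarith)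
      have := Real.add_one_lt_exp hne
      nlinarith
    have hE1 : Real.exp (x ^ 2) * (1 - 2 * x ^ 2) < 1 := by
      calc Real.exp (x ^ 2) * (1 - 2 * x ^ 2)
          < Real.exp (x ^ 2) * Real.exp (-x ^ 2) := by
            exact (mul_lt_mul_iff_right₀ hE).mpr hexp
        _ = 1 := hEE
    nlinarith

lemma G_tendsto : Filter.Tendsto G Filter.atTop Filter.atTop := by
  have hF1 : 0 < F 1 := F_pos one_pos
  have base : Filter.Tendsto (fun x => F 1 * (Real.exp x / x)) Filter.atTop Filter.atTop := by
    have := Real.tendsto_exp_div_pow_atTop 1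
    simp only [pow_one] at this
    exact this.const_mul_atTop hF1
  apply Filter.tendsto_atTop_mono' Filter.atTop _ base
  filter_upwards [Filter.eventually_ge_atTop (1:ℝ)] with x hx1
  have hx : 0 < x := lt_of_lt_of_le one_pos hx1
  rw [G_eq]
  have hFx : F 1 ≤ F x := by
    have hsplit : F 1 + ∫ t in (1:ℝ)..x, Real.exp (-t ^ 2) = F x :=
      intervalIntegral.integral_add_adjacent_intervals
        (hc.intervalIntegrable 0 1) (hc.intervalIntegrable 1 x)
    have hnn : 0 ≤ ∫ t in (1:ℝ)..x, Real.exp (-t ^ 2) :=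
      intervalIntegral.integral_nonneg hx1 fun t _ => (Real.exp_pos _).le
    linarith
  have hEx : Real.exp x ≤ Real.exp (x ^ 2) := Real.exp_le_exp.mpr (by nlinarith)
  have hrw : F 1 * (Real.exp x / x) = F 1 * Real.exp x / x := by ring
  rw [hrw, div_le_div_iff₀ hx hx]
  have hmain : F 1 * Real.exp x ≤ F x * Real.exp (x ^ 2) :=
    mul_le_mul hFx hEx (Real.exp_pos _).le (hF1.le.trans hFx)
  calc F 1 * Real.exp x * x ≤ F x * Real.exp (x ^ 2) * x :=
        mul_le_mul_of_nonneg_right hmain hx.le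
    _ = Real.exp (x ^ 2) * F x * x := by ring

end GAux

/-- `G` maps `(0, ∞)` bijectively onto `(1, ∞)`. -/
theorem G_bijOn : Set.BijOn G (Set.Ioi (0 : ℝ)) (Set.Ioi (1 : ℝ)) := by
  refine ⟨fun x hx => GAux.G_gt_one hx, GAux.G_strictMono.injOn, ?_⟩
  intro y hy
  have hy1 : (1:ℝ) < y := hy
  have hlog : 0 < Real.log y := Real.log_pos hy1
  set a : ℝ := Real.sqrt (Real.log y) / 2 with ha_def
  have ha : 0 < a := by positivity
  have ha2 : a ^ 2 = Real.log y / 4 := by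
    rw [ha_def, div_pow, Real.sq_sqrt hlog.le]; norm_num
  have hGa : G a < y := by
    rw [GAux.G_eq]
    have h1 : Real.exp (a ^ 2) * GAux.F a / a ≤ Real.exp (a ^ 2) := by
      rw [div_le_iff₀ ha]
      have := GAux.F_le ha.le
      nlinarith [Real.exp_pos (a ^ 2), (GAux.F_pos ha).le]
    have h2 : Real.exp (a ^ 2) < y := by
      calc Real.exp (a ^ 2) < Real.exp (Real.log y) :=
            Real.exp_lt_exp.mpr (by rw [ha2]; linarith)
        _ = y := Real.exp_log (by linarith)
    linarith
  obtain ⟨b, hGb, hab⟩ :=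
    ((GAux.G_tendsto.eventually_gt_atTop y).and (Filter.eventually_gt_atTop a)).exists
  have hy_mem : y ∈ Set.Ioo (G a) (G b) := ⟨hGa, hGb⟩
  have := intermediate_value_Ioo hab.le
    (GAux.G_cont.mono (Set.Icc_subset_Ioi_iff hab.le |>.mpr ha))
  obtain ⟨x, hx, hGx⟩ := this hy_mem
  exact ⟨x, lt_trans ha hx.1, hGx⟩
end
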